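/- Let G be a connected graph containing no induced K_{1,3} and no induced hammer (the hammer is the graph on vertices x1,...,x5 with edges (x1,x2),(x1,x3),(x2,x3),(x1,x4),(x4,x5), i.e., a triangle with a pendant path of length 2). If G contains an induced cycle C_n with n >= 7, then G is isomorphic to C_n. -/

import Mathlib

open SimpleGraph

/-- The hammer: a triangle `0,1,2` with a pendant path `0 - 3 - 4`. -/
def hammer : SimpleGraph (Fin 5) :=
  SimpleGraph.fromEdgeSet {s(0, 1), s(0, 2), s(1, 2), s(0, 3), s(3, 4)}

lemma no_claw {V : Type*} {G : SimpleGraph V}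
    (hclaw : ¬ Nonempty (completeBipartiteGraph (Fin 1) (Fin 3) ↪g G))
    {v a b c : V} (hva : G.Adj v a) (hvb : G.Adj v b) (hvc : G.Adj v c)
    (hab : ¬ G.Adj a b) (hac : ¬ G.Adj a c) (hbc : ¬ G.Adj b c)
    (nab : a ≠ b) (nac : a ≠ c) (nbc : b ≠ c) : False := by
  apply hclaw
  refine ⟨⟨⟨fun x => Sum.elim (fun _ => v) (![a, b, c]) x, ?_⟩, ?_⟩⟩
  · rintro (x | x) (y | y) h
    · simp [Subsingleton.elim x y]
    · exfalso; fin_cases x <;> fin_cases y <;> simp_all <;>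
        first
          | exact G.irrefl (h ▸ hva)
          | exact G.irrefl (h ▸ hvb)
          | exact G.irrefl (h ▸ hvc)
    · exfalso; fin_cases x <;> fin_cases y <;> simp_all <;>
        first
          | exact G.irrefl (h ▸ hva)
          | exact G.irrefl (h ▸ hvb)
          | exact G.irrefl (h ▸ hvc)
    · fin_cases x <;> fin_cases y <;> simp_all
  · rintro (x | x) (y | y) <;>
      fin_cases x <;> fin_cases y <;>
      dsimp only [DFunLike.coe] <;>
      simp_all [completeBipartiteGraph, hva.symm, hvb.symm, hvc.symm] <;>
      first
        | exact fun h => hab h.symm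
        | exact fun h => hac h.symm
        | exact fun h => hbc h.symm
        | exact G.irrefl

lemma hammer_adj (i j : Fin 5) : hammer.Adj i j ↔
    ((i = 0 ∧ j = 1) ∨ (i = 1 ∧ j = 0) ∨ (i = 0 ∧ j = 2) ∨ (i = 2 ∧ j = 0) ∨
     (i = 1 ∧ j = 2) ∨ (i = 2 ∧ j = 1) ∨ (i = 0 ∧ j = 3) ∨ (i = 3 ∧ j = 0) ∨
     (i = 3 ∧ j = 4) ∨ (i = 4 ∧ j = 3)) := by
  simp only [hammer, fromEdgeSet_adj, Set.mem_insert_iff, Set.mem_singleton_iff]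
  revert i j; decide

lemma no_hammer {V : Type*} {G : SimpleGraph V}
    (hham : ¬ Nonempty (hammer ↪g G))
    {x1 x2 x3 x4 x5 : V}
    (e12 : G.Adj x1 x2) (e13 : G.Adj x1 x3) (e23 : G.Adj x2 x3)
    (e14 : G.Adj x1 x4) (e45 : G.Adj x4 x5)
    (n24 : ¬ G.Adj x2 x4) (n34 : ¬ G.Adj x3 x4) (n15 : ¬ G.Adj x1 x5)
    (n25 : ¬ G.Adj x2 x5) (n35 : ¬ G.Adj x3 x5)
    (d24 : x2 ≠ x4) (d34 : x3 ≠ x4) (d15 : x1 ≠ x5) (d25 : x2 ≠ x5) (d35 : x3 ≠ x5) :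
    False := by
  apply hham
  refine ⟨⟨⟨![x1, x2, x3, x4, x5], ?_⟩, ?_⟩⟩
  · intro x y h
    fin_cases x <;> fin_cases y <;> simp only [Matrix.cons_val', Matrix.cons_val_zero,
      Matrix.cons_val_one, Matrix.head_cons, Matrix.cons_val_fin_one, Matrix.head_fin_const,
      Fin.mk_zero, Fin.mk_one] at h ⊢ <;>
      first
        | rfl
        | exact absurd h e12.ne | exact absurd h.symm e12.ne
        | exact absurd h e13.ne | exact absurd h.symm e13.ne
        | exact absurd h e23.ne | exact absurd h.symm e23.ne
        | exact absurd h e14.ne | exact absurd h.symm e14.ne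
        | exact absurd h e45.ne | exact absurd h.symm e45.ne
        | exact absurd h d24 | exact absurd h.symm d24
        | exact absurd h d34 | exact absurd h.symm d34
        | exact absurd h d15 | exact absurd h.symm d15
        | exact absurd h d25 | exact absurd h.symm d25
        | exact absurd h d35 | exact absurd h.symm d35
  · intro x y
    fin_cases x <;> fin_cases y <;> simp [hammer_adj] <;>
      first
        | exact G.irrefl
        | exact e12 | exact e12.symm | exact e13 | exact e13.symm
        | exact e23 | exact e23.symm | exact e14 | exact e14.symm
        | exact e45 | exact e45.symm
        | exact n24 | exact fun h => n24 h.symm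
        | exact n34 | exact fun h => n34 h.symm
        | exact n15 | exact fun h => n15 h.symm
        | exact n25 | exact fun h => n25 h.symm
        | exact n35 | exact fun h => n35 h.symm

lemma mod_helper {n x y : ℕ} (hn : 7 ≤ n) (hx : x < n) (hy : y < n) :
    (n - y + x) % n = 1 ↔ (x = y + 1 ∨ x + n = y + 1) := by
  rcases le_or_gt y x with h | h
  · have hxy : n - y + x = (x - y) + n := by omega
    rw [hxy, Nat.add_mod_right, Nat.mod_eq_of_lt (by omega)]
    omega
  · have hxy : n - y + x < n := by omega
    rw [Nat.mod_eq_of_lt hxy]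
    omega

lemma fin_adj {n a b : ℕ} (hn : 7 ≤ n) (ha : a < n) (hb : b < n) :
    (cycleGraph n).Adj ⟨a, ha⟩ ⟨b, hb⟩ ↔
      (a = b + 1 ∨ b = a + 1 ∨ a + n = b + 1 ∨ b + n = a + 1) := by
  rw [cycleGraph_adj']
  simp only [Fin.sub_def]
  rw [mod_helper hn ha hb, mod_helper hn hb ha]
  tauto

lemma fin_mk_sub {n a b : ℕ} (hb : b ≤ a) (ha : a < n) (hb' : b < n) :
    (⟨a, ha⟩ - ⟨b, hb'⟩ : Fin n) = ⟨a - b, by omega⟩ := by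
  have h7 : 0 < n := by omega
  apply Fin.ext
  rw [Fin.sub_def]
  show (n - b + a) % n = a - b
  have : n - b + a = (a - b) + n := by omega
  rw [this, Nat.add_mod_right, Nat.mod_eq_of_lt (by omega)]

def rotAut (n : ℕ) [NeZero n] (c : Fin n) : cycleGraph n ≃g cycleGraph n where
  toEquiv := ⟨fun x => x + c, fun x => x - c, fun x => add_sub_cancel_right x c, fun x => sub_add_cancel x c⟩
  map_rel_iff' := by
    intro a b
    simp only [Equiv.coe_fn_mk]
    rw [cycleGraph_adj', cycleGraph_adj', add_sub_add_right_eq_sub,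
      add_sub_add_right_eq_sub]

def reflAut (n : ℕ) [NeZero n] (c : Fin n) : cycleGraph n ≃g cycleGraph n where
  toEquiv := Equiv.subLeft c
  map_rel_iff' := by
    intro a b
    simp only [Equiv.subLeft_apply]
    rw [cycleGraph_adj', cycleGraph_adj']
    have h1 : c - a - (c - b) = b - a := by abel
    have h2 : c - b - (c - a) = a - b := by abel
    rw [h1, h2, or_comm]


lemma step_main {V : Type*} {G : SimpleGraph V}
    (hclaw : ¬ Nonempty (completeBipartiteGraph (Fin 1) (Fin 3) ↪g G))
    (hham : ¬ Nonempty (hammer ↪g G))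
    {n : ℕ} (hn : 7 ≤ n) (f : cycleGraph n ↪g G) {w : V}
    (hw : w ∉ Set.range ⇑f)
    (i2 i3 : Fin n) (hi2 : (i2 : ℕ) = 2) (hi3 : (i3 : ℕ) = 3)
    (h2 : G.Adj (f i2) w) (h3 : G.Adj (f i3) w) : False := by
  have lt : ∀ a : ℕ, a ≤ 6 → a < n := fun a ha => by omega
  obtain rfl : i2 = ⟨2, lt 2 (by norm_num)⟩ := Fin.ext (by simpa using hi2)
  obtain rfl : i3 = ⟨3, lt 3 (by norm_num)⟩ := Fin.ext (by simpa using hi3)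
  have adj : ∀ (a b : ℕ) (ha : a ≤ 6) (hb : b ≤ 6),
      G.Adj (f ⟨a, lt a ha⟩) (f ⟨b, lt b hb⟩) ↔
        (a = b + 1 ∨ b = a + 1 ∨ a + n = b + 1 ∨ b + n = a + 1) := fun a b ha hb => by
    rw [f.map_adj_iff, fin_adj hn (lt a ha) (lt b hb)]
  have hE : ∀ (a b : ℕ) (ha : a ≤ 6) (hb : b ≤ 6),
      (a = b + 1 ∨ b = a + 1 ∨ a + n = b + 1 ∨ b + n = a + 1) →
      G.Adj (f ⟨a, lt a ha⟩) (f ⟨b, lt b hb⟩) := fun a b ha hb h => (adj a b ha hb).mpr h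
  have hN : ∀ (a b : ℕ) (ha : a ≤ 6) (hb : b ≤ 6),
      ¬(a = b + 1 ∨ b = a + 1 ∨ a + n = b + 1 ∨ b + n = a + 1) →
      ¬ G.Adj (f ⟨a, lt a ha⟩) (f ⟨b, lt b hb⟩) := fun a b ha hb h h' => h ((adj a b ha hb).mp h')
  have ne' : ∀ (a b : ℕ) (ha : a ≤ 6) (hb : b ≤ 6), a ≠ b →
      f ⟨a, lt a ha⟩ ≠ f ⟨b, lt b hb⟩ := by
    intro a b ha hb hab e
    exact hab (by simpa [Fin.ext_iff] using f.injective e)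
  have wne : ∀ (a : ℕ) (ha : a ≤ 6), w ≠ f ⟨a, lt a ha⟩ := fun a ha h => hw ⟨_, h.symm⟩
  have hC : G.Adj w (f ⟨0, lt 0 (by norm_num)⟩) ∨ G.Adj w (f ⟨1, lt 1 (by norm_num)⟩) := by
    by_contra hcon
    push_neg at hcon
    exact no_hammer hham (hE 2 3 (by norm_num) (by norm_num) (by omega)) h2 h3
      (hE 2 1 (by norm_num) (by norm_num) (by omega))
      (hE 1 0 (by norm_num) (by norm_num) (by omega))
      (hN 3 1 (by norm_num) (by norm_num) (by omega))
      hcon.2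
      (hN 2 0 (by norm_num) (by norm_num) (by omega))
      (hN 3 0 (by norm_num) (by norm_num) (by omega))
      hcon.1
      (ne' 3 1 (by norm_num) (by norm_num) (by omega))
      (wne 1 (by norm_num))
      (ne' 2 0 (by norm_num) (by norm_num) (by omega))
      (ne' 3 0 (by norm_num) (by norm_num) (by omega))
      (wne 0 (by norm_num))
  have hD : G.Adj w (f ⟨4, lt 4 (by norm_num)⟩) ∨ G.Adj w (f ⟨5, lt 5 (by norm_num)⟩) := by
    by_contra hcon
    push_neg at hcon
    exact no_hammer hham (hE 3 2 (by norm_num) (by norm_num) (by omega)) h3 h2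
      (hE 3 4 (by norm_num) (by norm_num) (by omega))
      (hE 4 5 (by norm_num) (by norm_num) (by omega))
      (hN 2 4 (by norm_num) (by norm_num) (by omega))
      hcon.1
      (hN 3 5 (by norm_num) (by norm_num) (by omega))
      (hN 2 5 (by norm_num) (by norm_num) (by omega))
      hcon.2
      (ne' 2 4 (by norm_num) (by norm_num) (by omega))
      (wne 4 (by norm_num))
      (ne' 3 5 (by norm_num) (by norm_num) (by omega))
      (ne' 2 5 (by norm_num) (by norm_num) (by omega))
      (wne 5 (by norm_num))
  rcases hC with hw0 | hw1
  · rcases hD with hw4 | hw5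
    · exact no_claw hclaw hw0 h2.symm hw4
        (hN 0 2 (by norm_num) (by norm_num) (by omega))
        (hN 0 4 (by norm_num) (by norm_num) (by omega))
        (hN 2 4 (by norm_num) (by norm_num) (by omega))
        (ne' 0 2 (by norm_num) (by norm_num) (by omega))
        (ne' 0 4 (by norm_num) (by norm_num) (by omega))
        (ne' 2 4 (by norm_num) (by norm_num) (by omega))
    · exact no_claw hclaw hw0 h2.symm hw5
        (hN 0 2 (by norm_num) (by norm_num) (by omega))
        (hN 0 5 (by norm_num) (by norm_num) (by omega))
        (hN 2 5 (by norm_num) (by norm_num) (by omega))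
        (ne' 0 2 (by norm_num) (by norm_num) (by omega))
        (ne' 0 5 (by norm_num) (by norm_num) (by omega))
        (ne' 2 5 (by norm_num) (by norm_num) (by omega))
  · rcases hD with hw4 | hw5
    · have hF : G.Adj w (f ⟨5, lt 5 (by norm_num)⟩) ∨ G.Adj w (f ⟨6, lt 6 (by norm_num)⟩) := by
        by_contra hcon
        push_neg at hcon
        exact no_hammer hham (hE 4 3 (by norm_num) (by norm_num) (by omega)) hw4.symm h3
          (hE 4 5 (by norm_num) (by norm_num) (by omega))
          (hE 5 6 (by norm_num) (by norm_num) (by omega))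
          (hN 3 5 (by norm_num) (by norm_num) (by omega))
          hcon.1
          (hN 4 6 (by norm_num) (by norm_num) (by omega))
          (hN 3 6 (by norm_num) (by norm_num) (by omega))
          hcon.2
          (ne' 3 5 (by norm_num) (by norm_num) (by omega))
          (wne 5 (by norm_num))
          (ne' 4 6 (by norm_num) (by norm_num) (by omega))
          (ne' 3 6 (by norm_num) (by norm_num) (by omega))
          (wne 6 (by norm_num))
      rcases hF with hw5 | hw6
      · exact no_claw hclaw hw1 h3.symm hw5
          (hN 1 3 (by norm_num) (by norm_num) (by omega))
          (hN 1 5 (by norm_num) (by norm_num) (by omega))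
          (hN 3 5 (by norm_num) (by norm_num) (by omega))
          (ne' 1 3 (by norm_num) (by norm_num) (by omega))
          (ne' 1 5 (by norm_num) (by norm_num) (by omega))
          (ne' 3 5 (by norm_num) (by norm_num) (by omega))
      · exact no_claw hclaw hw1 h3.symm hw6
          (hN 1 3 (by norm_num) (by norm_num) (by omega))
          (hN 1 6 (by norm_num) (by norm_num) (by omega))
          (hN 3 6 (by norm_num) (by norm_num) (by omega))
          (ne' 1 3 (by norm_num) (by norm_num) (by omega))
          (ne' 1 6 (by norm_num) (by norm_num) (by omega))
          (ne' 3 6 (by norm_num) (by norm_num) (by omega))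
    · exact no_claw hclaw hw1 h3.symm hw5
        (hN 1 3 (by norm_num) (by norm_num) (by omega))
        (hN 1 5 (by norm_num) (by norm_num) (by omega))
        (hN 3 5 (by norm_num) (by norm_num) (by omega))
        (ne' 1 3 (by norm_num) (by norm_num) (by omega))
        (ne' 1 5 (by norm_num) (by norm_num) (by omega))
        (ne' 3 5 (by norm_num) (by norm_num) (by omega))

lemma step2 {V : Type*} {G : SimpleGraph V}
    (hclaw : ¬ Nonempty (completeBipartiteGraph (Fin 1) (Fin 3) ↪g G))
    (hham : ¬ Nonempty (hammer ↪g G))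
    {n : ℕ} (hn : 7 ≤ n) (f : cycleGraph n ↪g G) {w : V}
    (hw : w ∉ Set.range ⇑f)
    (i2 : Fin n) (hi2 : (i2 : ℕ) = 2) (h2 : G.Adj (f i2) w) : False := by
  haveI : NeZero n := ⟨by omega⟩
  have lt : ∀ a : ℕ, a ≤ 6 → a < n := fun a ha => by omega
  obtain rfl : i2 = ⟨2, lt 2 (by norm_num)⟩ := Fin.ext (by simpa using hi2)
  have adj : ∀ (a b : ℕ) (ha : a ≤ 6) (hb : b ≤ 6),
      G.Adj (f ⟨a, lt a ha⟩) (f ⟨b, lt b hb⟩) ↔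
        (a = b + 1 ∨ b = a + 1 ∨ a + n = b + 1 ∨ b + n = a + 1) := fun a b ha hb => by
    rw [f.map_adj_iff, fin_adj hn (lt a ha) (lt b hb)]
  have ne' : ∀ (a b : ℕ) (ha : a ≤ 6) (hb : b ≤ 6), a ≠ b →
      f ⟨a, lt a ha⟩ ≠ f ⟨b, lt b hb⟩ := by
    intro a b ha hb hab e
    exact hab (by simpa [Fin.ext_iff] using f.injective e)
  have wne : ∀ (a : ℕ) (ha : a ≤ 6), w ≠ f ⟨a, lt a ha⟩ := fun a ha h => hw ⟨_, h.symm⟩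
  have hA : G.Adj w (f ⟨1, lt 1 (by norm_num)⟩) ∨ G.Adj w (f ⟨3, lt 3 (by norm_num)⟩) := by
    by_contra hcon
    push_neg at hcon
    exact no_claw hclaw h2
      ((adj 2 1 (by norm_num) (by norm_num)).mpr (by omega))
      ((adj 2 3 (by norm_num) (by norm_num)).mpr (by omega))
      hcon.1 hcon.2
      (fun h => (by omega : ¬_) ((adj 1 3 (by norm_num) (by norm_num)).mp h))
      (wne 1 (by norm_num))
      (wne 3 (by norm_num))
      (ne' 1 3 (by norm_num) (by norm_num) (by omega))
  rcases hA with hw1 | hw3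
  · -- reflect: g j = f (4 - j)
    set g := f.comp (reflAut n ⟨4, lt 4 (by norm_num)⟩).toEmbedding with hg
    have hwg : w ∉ Set.range ⇑g := by
      rintro ⟨x, hx⟩
      exact hw ⟨_, hx⟩
    have e2 : ((⟨4, lt 4 (by norm_num)⟩ : Fin n) - ⟨2, lt 2 (by norm_num)⟩) = ⟨2, lt 2 (by norm_num)⟩ := by
      rw [fin_mk_sub (by norm_num)]
    have e3 : ((⟨4, lt 4 (by norm_num)⟩ : Fin n) - ⟨3, lt 3 (by norm_num)⟩) = ⟨1, lt 1 (by norm_num)⟩ := by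
      rw [fin_mk_sub (by norm_num)]
    apply step_main hclaw hham hn g hwg ⟨2, lt 2 (by norm_num)⟩ ⟨3, lt 3 (by norm_num)⟩ rfl rfl
    · show G.Adj (f ((⟨4, lt 4 (by norm_num)⟩ : Fin n) - ⟨2, lt 2 (by norm_num)⟩)) w
      rw [e2]; exact h2
    · show G.Adj (f ((⟨4, lt 4 (by norm_num)⟩ : Fin n) - ⟨3, lt 3 (by norm_num)⟩)) w
      rw [e3]; exact hw1.symm
  · exact step_main hclaw hham hn f hw ⟨2, lt 2 (by norm_num)⟩ ⟨3, lt 3 (by norm_num)⟩ rfl rfl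
      h2 hw3.symm


/-- A connected `{K_{1,3}, hammer}`-free graph containing an induced cycle `C_n`
with `n ≥ 7` is isomorphic to `C_n`. -/
theorem claw_hammer_free_long_cycle {V : Type*} (G : SimpleGraph V) (hconn : G.Connected)
    (hclaw : ¬ Nonempty (completeBipartiteGraph (Fin 1) (Fin 3) ↪g G))
    (hham : ¬ Nonempty (hammer ↪g G))
    (n : ℕ) (hn : 7 ≤ n) (f : cycleGraph n ↪g G) :
    Nonempty (cycleGraph n ≃g G) := by
  haveI : NeZero n := ⟨by omega⟩
  have lt2 : (2 : ℕ) < n := by omega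
  have key : ∀ (i : Fin n) (x : V), G.Adj (f i) x → x ∈ Set.range ⇑f := by
    intro i x hx
    by_contra hxr
    have hwg : x ∉ Set.range ⇑(f.comp (rotAut n (i - ⟨2, lt2⟩)).toEmbedding) := by
      rintro ⟨y, hy⟩
      exact hxr ⟨_, hy⟩
    have e : ((⟨2, lt2⟩ : Fin n) + (i - ⟨2, lt2⟩)) = i := by abel
    have hadj : G.Adj ((f.comp (rotAut n (i - ⟨2, lt2⟩)).toEmbedding) ⟨2, lt2⟩) x := by
      have h' : G.Adj (f ((⟨2, lt2⟩ : Fin n) + (i - ⟨2, lt2⟩))) x := by rw [e]; exact hx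
      exact h'
    exact step2 hclaw hham hn _ hwg ⟨2, lt2⟩ rfl hadj
  have walkcl : ∀ {u x : V}, G.Walk u x → u ∈ Set.range ⇑f → x ∈ Set.range ⇑f := by
    intro u x p
    induction p with
    | nil => exact id
    | cons h _ ih =>
      rintro ⟨i, rfl⟩
      exact ih (key i _ h)
  have hsurj : Function.Surjective ⇑f := by
    intro x
    obtain ⟨p⟩ := hconn.preconnected (f ⟨0, by omega⟩) x
    exact walkcl p ⟨_, rfl⟩
  exact ⟨⟨Equiv.ofBijective ⇑f ⟨f.injective, hsurj⟩, fun {a b} => f.map_rel_iff⟩⟩
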